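/- Let S = X*P be a dense birecurrent set of finite type with left root X and P the associated set of proper prefixes of X. Then for any positive Bernoulli distribution π on A*, the average length of X satisfies λ(X) = i(S)·π(P). -/

import Mathlib

namespace Birec

variable {A : Type*}

/-- The left quotient `u⁻¹S = {v | u v ∈ S}`. -/
def leftQuot (S : Set (List A)) (u : List A) : Set (List A) := {v | u ++ v ∈ S}

/-- A language is recognizable iff it has finitely many left quotients (Nerode). -/
def Recognizable (S : Set (List A)) : Prop := (Set.range (leftQuot S)).Finite

/-- The reversal `S̃` of a language. -/
def langRev (S : Set (List A)) : Set (List A) := {w | w.reverse ∈ S}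

/-- A recognizable set is recurrent if its minimal automaton (whose states are the
nonempty left quotients) is strongly connected. -/
def Recurrent (S : Set (List A)) : Prop :=
  Recognizable S ∧
    ∀ u v : List A, (leftQuot S u).Nonempty → (leftQuot S v).Nonempty →
      ∃ w : List A, leftQuot S (u ++ w) = leftQuot S v

/-- A set is birecurrent if it is recurrent together with its reversal. -/
def Birecurrent (S : Set (List A)) : Prop := Recurrent S ∧ Recurrent (langRev S)

/-- A set is dense if every word is a factor of one of its words. -/
def LangDense (S : Set (List A)) : Prop := ∀ v : List A, ∃ u w : List A, u ++ v ++ w ∈ S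

end Birec
namespace Birec

variable {A : Type*}

/-- A prefix code: a set of nonempty words, none of which is a proper prefix of another. -/
def IsPrefixCode (X : Set (List A)) : Prop :=
  [] ∉ X ∧ ∀ x ∈ X, ∀ y ∈ X, x <+: y → x = y

/-- A suffix code: a set of nonempty words, none of which is a proper suffix of another. -/
def IsSuffixCode (X : Set (List A)) : Prop :=
  [] ∉ X ∧ ∀ x ∈ X, ∀ y ∈ X, x <:+ y → x = y

/-- A bifix code is both prefix and suffix. -/
def IsBifixCode (X : Set (List A)) : Prop := IsPrefixCode X ∧ IsSuffixCode X

/-- A code: every word has at most one factorization into words of `X`. -/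
def IsCode (X : Set (List A)) : Prop :=
  [] ∉ X ∧ ∀ l m : List (List A), (∀ x ∈ l, x ∈ X) → (∀ x ∈ m, x ∈ X) →
    l.flatten = m.flatten → l = m

/-- The submonoid `X*` generated by a set of words. -/
def star (X : Set (List A)) : Set (List A) :=
  {w | ∃ l : List (List A), (∀ x ∈ l, x ∈ X) ∧ l.flatten = w}

/-- Product of two languages. -/
def setMul (X Y : Set (List A)) : Set (List A) := {w | ∃ x ∈ X, ∃ y ∈ Y, w = x ++ y}

/-- The proper prefixes of words of `X`. -/
def properPrefixes (X : Set (List A)) : Set (List A) := {p | ∃ x ∈ X, p <+: x ∧ p ≠ x}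

/-- The proper suffixes of words of `X`. -/
def properSuffixes (X : Set (List A)) : Set (List A) := {p | ∃ x ∈ X, p <:+ x ∧ p ≠ x}

def IsMaximalPrefixCode (X : Set (List A)) : Prop :=
  IsPrefixCode X ∧ ∀ Y : Set (List A), IsPrefixCode Y → X ⊆ Y → Y = X

def IsMaximalSuffixCode (X : Set (List A)) : Prop :=
  IsSuffixCode X ∧ ∀ Y : Set (List A), IsSuffixCode Y → X ⊆ Y → Y = X

def IsMaximalBifixCode (X : Set (List A)) : Prop :=
  IsBifixCode X ∧ ∀ Y : Set (List A), IsBifixCode Y → X ⊆ Y → Y = X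

def IsMaximalCode (X : Set (List A)) : Prop :=
  IsCode X ∧ ∀ Y : Set (List A), IsCode Y → X ⊆ Y → Y = X

end Birec
namespace Birec

variable {A : Type*}

/-- The stabilizer of the initial state of the minimal automaton of `S`:
the submonoid recognized by `(Q, i, i)`. -/
def stab (S : Set (List A)) : Set (List A) := {w | leftQuot S w = S}

/-- The left root of a recurrent set: the prefix code generating the submonoid
recognized by the minimal automaton with the initial state as unique terminal state,
i.e. the minimal generating set of that submonoid. -/
def leftRoot (S : Set (List A)) : Set (List A) :=
  {w | w ∈ stab S ∧ w ≠ [] ∧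
    ¬∃ u v : List A, u ∈ stab S ∧ v ∈ stab S ∧ u ≠ [] ∧ v ≠ [] ∧ w = u ++ v}

/-- The right root of a birecurrent set: the reversal of the left root of the reversal. -/
def rightRoot (S : Set (List A)) : Set (List A) := langRev (leftRoot (langRev S))

/-- A birecurrent set is of finite type if its left and right roots are finite. -/
def FiniteType (S : Set (List A)) : Prop := (leftRoot S).Finite ∧ (rightRoot S).Finite

end Birec
namespace Birec

variable {A : Type*}

/-- The states of the minimal automaton of `S`: the nonempty left quotients. -/
def MinStates (S : Set (List A)) : Set (Set (List A)) :=
  {q | q.Nonempty ∧ ∃ u : List A, q = leftQuot S u}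

/-- The terminal states of the minimal automaton of `S`. -/
def TerminalStates (S : Set (List A)) : Set (Set (List A)) :=
  {q | q ∈ MinStates S ∧ [] ∈ q}

/-- The rank of a word in the minimal automaton of `S`: the number of states in the
image of the (partial) map induced by `w` on the states. -/
noncomputable def mrank (S : Set (List A)) (w : List A) : ℕ :=
  {T : Set (List A) | T.Nonempty ∧ ∃ u : List A, T = leftQuot S (u ++ w)}.ncard

/-- `w` is a word of minimal nonzero rank in the minimal automaton of `S`. -/
def IsMinNonzeroMrank (S : Set (List A)) (w : List A) : Prop :=
  mrank S w ≠ 0 ∧ ∀ v : List A, mrank S v ≠ 0 → mrank S w ≤ mrank S v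

/-- The set of terminal states is saturated by `w`: it is a union of classes of
the kernel of `w` (in particular it is contained in the domain of `w`). -/
def SaturatedBy (S : Set (List A)) (w : List A) : Prop :=
  (∀ q ∈ TerminalStates S, (leftQuot q w).Nonempty) ∧
    ∀ p q : Set (List A), p ∈ MinStates S → q ∈ MinStates S →
      (leftQuot p w).Nonempty → (leftQuot q w).Nonempty →
      leftQuot p w = leftQuot q w → ([] ∈ p ↔ [] ∈ q)

/-- The degree of `S`: the minimal nonzero rank of a word in its minimal automaton. -/
noncomputable def langDegree (S : Set (List A)) : ℕ :=
  sInf {n : ℕ | n ≠ 0 ∧ ∃ w : List A, mrank S w = n}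

end Birec

open Birec

namespace Birec
variable {A : Type*}

theorem leftQuot_nil (S : Set (List A)) : leftQuot S [] = S := rfl

theorem mem_leftQuot {S : Set (List A)} {u v : List A} : v ∈ leftQuot S u ↔ u ++ v ∈ S := Iff.rfl

theorem leftQuot_append (S : Set (List A)) (u v : List A) :
    leftQuot S (u ++ v) = leftQuot (leftQuot S u) v := by
  ext t; simp [leftQuot, List.append_assoc]

theorem leftQuot_empty (u : List A) : leftQuot (∅ : Set (List A)) u = ∅ := by
  ext t; simp [leftQuot]

end Birec

namespace Birec
variable {A : Type*}

theorem S_nonempty {S : Set (List A)} (hdense : LangDense S) : S.Nonempty := by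
  obtain ⟨u, w, h⟩ := hdense []
  exact ⟨u ++ [] ++ w, h⟩

theorem minStates_finite {S : Set (List A)} (hrec : Recognizable S) :
    (MinStates S).Finite := by
  apply hrec.subset
  rintro q ⟨-, u, rfl⟩
  exact ⟨u, rfl⟩

/-- Completeness of the minimal automaton of a dense recurrent set. -/
theorem complete {S : Set (List A)} (hdense : LangDense S) (hrec : Recurrent S) :
    ∀ u : List A, (leftQuot S u).Nonempty := by
  by_contra hc
  push_neg at hc
  obtain ⟨u₀, hu₀⟩ := hc

  -- a shortest word with empty quotient
  have hex : ∃ n, ∃ u : List A, u.length = n ∧ leftQuot S u = ∅ := ⟨_, u₀, rfl, hu₀⟩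
  classical
  obtain ⟨v, hvlen, hvempty⟩ := Nat.find_spec hex
  have hvne : v ≠ [] := by
    rintro rfl
    rw [leftQuot_nil] at hvempty
    exact (S_nonempty hdense).ne_empty hvempty
  set v' := v.dropLast with hv'
  have hvdec : v' ++ [v.getLast hvne] = v := List.dropLast_append_getLast hvne
  have hv'ne : (leftQuot S v').Nonempty := by
    rw [Set.nonempty_iff_ne_empty]
    intro hemp
    have hlt : v'.length < Nat.find hex := by
      have h1 : v.dropLast.length = v.length - 1 := List.length_dropLast
      have h2 := List.length_pos_iff.mpr hvne
      rw [hv']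
      omega
    exact Nat.find_min hex hlt ⟨v', rfl, hemp⟩
  -- killer word for each live state
  have killer : ∀ y : List A, (leftQuot S y).Nonempty → ∃ z, leftQuot S (y ++ z) = ∅ := by
    intro y hy
    obtain ⟨t, ht⟩ := hrec.2 y v' hy hv'ne
    refine ⟨t ++ [v.getLast hvne], ?_⟩
    rw [← List.append_assoc, leftQuot_append, ht, ← leftQuot_append, hvdec, hvempty]
  -- kill all states in a finite set
  have killall : ∀ F : Finset (Set (List A)), (∀ q ∈ F, q ∈ MinStates S) →
      ∃ V : List A, ∀ q ∈ F, leftQuot q V = ∅ := by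
    intro F
    induction F using Finset.induction with
    | empty => exact fun _ => ⟨[], by simp⟩
    | @insert q F hq ih =>
      intro hmem
      obtain ⟨V, hV⟩ := ih (fun r hr => hmem r (Finset.mem_insert_of_mem hr))
      obtain ⟨-, y, rfl⟩ := hmem q (Finset.mem_insert_self q F)
      by_cases hyv : (leftQuot S (y ++ V)).Nonempty
      · obtain ⟨z, hz⟩ := killer (y ++ V) hyv
        refine ⟨V ++ z, ?_⟩
        intro r hr
        rcases Finset.mem_insert.mp hr with rfl | hr
        · rw [← leftQuot_append, ← List.append_assoc]
          exact hz
        · rw [leftQuot_append, hV r hr, leftQuot_empty]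
      · rw [Set.not_nonempty_iff_eq_empty, leftQuot_append] at hyv
        refine ⟨V, ?_⟩
        intro r hr
        rcases Finset.mem_insert.mp hr with rfl | hr
        · exact hyv
        · exact hV r hr
  obtain ⟨V, hV⟩ := killall (minStates_finite hrec.1).toFinset
    (fun q hq => (Set.Finite.mem_toFinset _).mp hq)
  obtain ⟨x, y, hxy⟩ := hdense V
  have hx : (leftQuot S x).Nonempty := ⟨V ++ y, by rw [mem_leftQuot, ← List.append_assoc]; exact hxy⟩
  have : leftQuot (leftQuot S x) V = ∅ :=
    hV _ ((Set.Finite.mem_toFinset _).mpr ⟨hx, x, rfl⟩)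
  rw [← leftQuot_append] at this
  have hy2 : y ∈ leftQuot S (x ++ V) := hxy
  rw [‹leftQuot S (x ++ V) = ∅›] at hy2
  exact hy2

end Birec

namespace Birec
variable {A : Type*}

theorem stab_append {S : Set (List A)} {u v : List A}
    (hu : u ∈ stab S) (hv : v ∈ stab S) : u ++ v ∈ stab S := by
  simp only [stab, Set.mem_setOf_eq] at *
  rw [leftQuot_append, hu, hv]

theorem stab_right_unit {S : Set (List A)} {u v : List A}
    (hu : u ∈ stab S) (huv : u ++ v ∈ stab S) : v ∈ stab S := by
  simp only [stab, Set.mem_setOf_eq] at *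
  rwa [leftQuot_append, hu] at huv

theorem leftRoot_ne_nil {S : Set (List A)} {x : List A} (hx : x ∈ leftRoot S) : x ≠ [] := hx.2.1

theorem leftRoot_stab {S : Set (List A)} {x : List A} (hx : x ∈ leftRoot S) : x ∈ stab S := hx.1

/-- The left root is a prefix code. -/
theorem leftRoot_prefix {S : Set (List A)} {x y : List A}
    (hx : x ∈ leftRoot S) (hy : y ∈ leftRoot S) (hxy : x <+: y) : x = y := by
  obtain ⟨t, rfl⟩ := hxy
  by_contra hne
  have ht : t ≠ [] := by rintro rfl; simp at hne
  exact hy.2.2 ⟨x, t, hx.1, stab_right_unit hx.1 hy.1, hx.2.1, ht, rfl⟩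

theorem properPrefixes_inter_leftRoot {S : Set (List A)} :
    ∀ q ∈ properPrefixes (leftRoot S), q ∉ leftRoot S := by
  rintro q ⟨x, hx, hpre, hne⟩ hq
  exact hne (leftRoot_prefix hq hx hpre)

/-- Every word is a prefix of a word in `X* X`, assuming `S = X* P` and completeness. -/
theorem prefix_of_starX {S P : Set (List A)}
    (hP : P = {q | q ∈ S ∧ q ∈ properPrefixes (leftRoot S)})
    (hSP : S = setMul (star (leftRoot S)) P)
    (hcomp : ∀ u : List A, (leftQuot S u).Nonempty) (u : List A) :
    ∃ l : List (List A), (∀ x ∈ l, x ∈ leftRoot S) ∧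
      ∃ x ∈ leftRoot S, u <+: l.flatten ++ x := by
  obtain ⟨y, hy⟩ := hcomp u
  rw [mem_leftQuot, hSP] at hy
  obtain ⟨m, hm, q, hq, huy⟩ := hy
  obtain ⟨l, hl, rfl⟩ := hm
  rw [hP] at hq
  obtain ⟨-, x, hx, hqx, -⟩ := hq
  obtain ⟨t, ht⟩ := hqx
  refine ⟨l, hl, x, hx, ?_⟩
  rw [← ht]
  have h1 : u <+: l.flatten ++ (q ++ t) := by
    calc u <+: u ++ y := List.prefix_append u y
    _ = l.flatten ++ q := huy
    _ <+: l.flatten ++ (q ++ t) := by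
        rw [← List.append_assoc]
        exact List.prefix_append _ t
  exact h1

/-- Classification: the one-letter extension of a proper prefix of `X` is a proper
prefix of `X` or an element of `X`. -/
theorem succ_mem {S P : Set (List A)}
    (hP : P = {q | q ∈ S ∧ q ∈ properPrefixes (leftRoot S)})
    (hSP : S = setMul (star (leftRoot S)) P)
    (hcomp : ∀ u : List A, (leftQuot S u).Nonempty)
    {p : List A} (hp : p ∈ properPrefixes (leftRoot S)) (a : A) :
    p ++ [a] ∈ properPrefixes (leftRoot S) ∪ leftRoot S := by
  obtain ⟨l, hl, x, hx, hpre⟩ := prefix_of_starX hP hSP hcomp (p ++ [a])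
  obtain ⟨x₂, hx₂, hpx₂, hpne⟩ := hp
  -- a helper: if p ++ [a] <+: z for z ∈ X then done
  have base : ∀ z ∈ leftRoot S, p ++ [a] <+: z → p ++ [a] ∈ properPrefixes (leftRoot S) ∪ leftRoot S := by
    intro z hz hpz
    by_cases h : p ++ [a] = z
    · exact Or.inr (h ▸ hz)
    · exact Or.inl ⟨z, hz, hpz, h⟩
  cases l with
  | nil => simp only [List.flatten_nil, List.nil_append] at hpre; exact base x hx hpre
  | cons x₁ l' =>
    have hx₁ : x₁ ∈ leftRoot S := hl x₁ (by simp)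
    rw [List.flatten_cons, List.append_assoc] at hpre
    by_cases hlen : (p ++ [a]).length ≤ x₁.length
    · exact base x₁ hx₁ (List.prefix_of_prefix_length_le hpre (List.prefix_append x₁ _) hlen)
    · exfalso
      have h1 : x₁ <+: p := by
        have h2 : x₁ <+: p ++ [a] :=
          List.prefix_of_prefix_length_le (List.prefix_append x₁ _) hpre (le_of_lt (not_le.mp hlen))
        have h3 : x₁.length ≤ p.length := by
          have := not_le.mp hlen
          simp only [List.length_append, List.length_singleton] at this
          omega
        exact List.prefix_of_prefix_length_le h2 (List.prefix_append p [a]) (by simpa using h3)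
      have h4 : x₁ <+: x₂ := h1.trans hpx₂
      have h5 : x₁ = x₂ := leftRoot_prefix hx₁ hx₂ h4
      have h6 : p.length < x₂.length := by
        rcases hpx₂ with ⟨t, rfl⟩
        have ht : t ≠ [] := by rintro rfl; simp at hpne
        have := List.length_pos_iff.mpr ht
        simp only [List.length_append]
        omega
      have := h1.length_le
      have h7 : x₁.length = x₂.length := by rw [h5]
      omega

/-- The parent of a nonempty element of `Q ∪ X` lies in `Q`. -/
theorem parent_mem {S : Set (List A)} {r : List A}
    (hr : r ∈ properPrefixes (leftRoot S) ∪ leftRoot S) (hne : r ≠ []) :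
    r.dropLast ∈ properPrefixes (leftRoot S) := by
  have hdp : r.dropLast <+: r := List.dropLast_prefix r
  have hlen : r.dropLast.length < r.length := by
    have : r.dropLast.length = r.length - 1 := List.length_dropLast
    have := List.length_pos_iff.mpr hne
    omega
  cases hr with
  | inr hr => exact ⟨r, hr, hdp, fun h => by rw [h] at hlen; omega⟩
  | inl hr =>
    obtain ⟨x, hx, hpre, hne'⟩ := hr
    refine ⟨x, hx, hdp.trans hpre, fun h => ?_⟩
    have := hpre.length_le
    rw [h] at hlen
    omega

end Birec

namespace Birec
variable {A : Type*}

theorem properPrefixes_finite {X : Set (List A)} (hX : X.Finite) :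
    (properPrefixes X).Finite := by
  have h : properPrefixes X ⊆ ⋃ x ∈ X, {q : List A | q ∈ x.inits} := by
    rintro q ⟨x, hx, hpre, -⟩
    exact Set.mem_biUnion hx ((List.mem_inits q x).mpr hpre)
  exact (hX.biUnion (fun x _ => x.inits.finite_toSet)).subset h

open Classical in
/-- The master tree identity. -/
theorem master {A : Type*} [Fintype A] {S P : Set (List A)}
    (hP : P = {q | q ∈ S ∧ q ∈ properPrefixes (leftRoot S)})
    (hSP : S = setMul (star (leftRoot S)) P)
    (hcomp : ∀ u : List A, (leftQuot S u).Nonempty)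
    (hXfin : (leftRoot S).Finite) (hXne : (leftRoot S).Nonempty)
    (p : A → ℝ) (hsum : ∑ a, p a = 1) (g : List A → ℝ) :
    ∑ q ∈ (properPrefixes_finite hXfin).toFinset,
        (q.map p).prod * (∑ a, p a * g (q ++ [a]))
      = (∑ q ∈ (properPrefixes_finite hXfin).toFinset, (q.map p).prod * g q
          + ∑ x ∈ hXfin.toFinset, (x.map p).prod * g x) - g [] := by
  set Qf := (properPrefixes_finite hXfin).toFinset with hQf
  set Xf := hXfin.toFinset with hXf
  have hmemQ : ∀ q, q ∈ Qf ↔ q ∈ properPrefixes (leftRoot S) := fun q =>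
    Set.Finite.mem_toFinset _
  have hmemX : ∀ x, x ∈ Xf ↔ x ∈ leftRoot S := fun x => Set.Finite.mem_toFinset _
  have hQX : Disjoint Qf Xf := by
    rw [Finset.disjoint_left]
    intro q hq hq'
    exact properPrefixes_inter_leftRoot q ((hmemQ q).mp hq) ((hmemX q).mp hq')
  have hnilQ : [] ∈ Qf := by
    obtain ⟨x, hx⟩ := hXne
    exact (hmemQ []).mpr ⟨x, hx, List.nil_prefix, fun h => leftRoot_ne_nil hx h.symm⟩
  have himg : (Qf ×ˢ (Finset.univ : Finset A)).image
      (fun pa : List A × A => pa.1 ++ [pa.2]) = (Qf ∪ Xf).erase [] := by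
    ext r
    simp only [Finset.mem_image, Finset.mem_product, Finset.mem_erase, Finset.mem_union]
    constructor
    · rintro ⟨⟨q, a⟩, ⟨hq, -⟩, rfl⟩
      refine ⟨by simp, ?_⟩
      rcases succ_mem hP hSP hcomp ((hmemQ q).mp hq) a with h | h
      · exact Or.inl ((hmemQ _).mpr h)
      · exact Or.inr ((hmemX _).mpr h)
    · rintro ⟨hne, hr⟩
      obtain ⟨L, b, rfl⟩ := (List.eq_nil_or_concat' r).resolve_left hne
      refine ⟨(L, b), ⟨?_, Finset.mem_univ b⟩, rfl⟩
      have hr' : L ++ [b] ∈ properPrefixes (leftRoot S) ∪ leftRoot S := by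
        rcases hr with h | h
        · exact Or.inl ((hmemQ _).mp h)
        · exact Or.inr ((hmemX _).mp h)
      have h2 := parent_mem hr' hne
      rw [List.dropLast_concat] at h2
      exact (hmemQ L).mpr h2
  have hinj : ∀ x ∈ Qf ×ˢ (Finset.univ : Finset A), ∀ y ∈ Qf ×ˢ (Finset.univ : Finset A),
      (fun pa : List A × A => pa.1 ++ [pa.2]) x = (fun pa : List A × A => pa.1 ++ [pa.2]) y
      → x = y := by
    rintro ⟨q₁, a₁⟩ - ⟨q₂, a₂⟩ - h
    simp only at h
    obtain ⟨h1, h2⟩ := List.append_inj' h rfl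
    simp only [List.cons.injEq] at h2
    exact Prod.ext h1 h2.1
  have key := Finset.sum_image (f := fun r => (r.map p).prod * g r) hinj
  rw [himg] at key
  have hsum_prod : ∑ pa ∈ Qf ×ˢ (Finset.univ : Finset A),
      ((pa.1 ++ [pa.2]).map p).prod * g (pa.1 ++ [pa.2])
      = ∑ q ∈ Qf, (q.map p).prod * (∑ a, p a * g (q ++ [a])) := by
    rw [Finset.sum_product]
    refine Finset.sum_congr rfl fun q hq => ?_
    rw [Finset.mul_sum]
    refine Finset.sum_congr rfl fun a _ => ?_
    simp only [List.map_append, List.prod_append, List.map_cons, List.map_nil,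
      List.prod_cons, List.prod_nil]
    ring
  have herase : ∑ r ∈ (Qf ∪ Xf).erase [], (r.map p).prod * g r
      = (∑ q ∈ Qf, (q.map p).prod * g q + ∑ x ∈ Xf, (x.map p).prod * g x) - g [] := by
    rw [Finset.sum_erase_eq_sub (Finset.mem_union_left _ hnilQ), Finset.sum_union hQX]
    simp
  rw [← hsum_prod, ← key, herase]

end Birec

namespace Birec

/-- Existence of a stationary distribution for a finite row-stochastic matrix. -/
theorem exists_stationary {ι : Type*} [Fintype ι] [DecidableEq ι] [Nonempty ι]
    (N : Matrix ι ι ℝ) (hN : ∀ i j, 0 ≤ N i j) (hrow : ∀ i, ∑ j, N i j = 1) :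
    ∃ μ : ι → ℝ, (∀ i, 0 ≤ μ i) ∧ (∑ i, μ i) = 1 ∧ ∀ j, (∑ i, μ i * N i j) = μ j := by
  have hdet : (N - 1).det = 0 := by
    rw [← Matrix.exists_mulVec_eq_zero_iff]
    refine ⟨fun _ => 1, ?_, ?_⟩
    · intro h
      have := congrFun h (Classical.arbitrary ι)
      simp at this
    · funext i
      simp only [Matrix.mulVec, dotProduct, Matrix.sub_apply, Matrix.one_apply,
        sub_mul, mul_one]
      rw [Finset.sum_sub_distrib, hrow i]
      simp [Pi.zero_apply]
  obtain ⟨x, hx0, hxN⟩ := Matrix.exists_vecMul_eq_zero_iff.mpr hdet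
  have hstat : ∀ j, (∑ i, x i * N i j) = x j := by
    intro j
    have := congrFun hxN j
    simp only [Matrix.vecMul, dotProduct, Matrix.sub_apply, Matrix.one_apply,
      mul_sub, Pi.zero_apply] at this
    rw [Finset.sum_sub_distrib] at this
    have h2 : (∑ i, x i * if i = j then (1:ℝ) else 0) = x j := by
      simp [Finset.sum_ite_eq']
    rw [h2] at this
    linarith [this]
  -- |x| is stationary
  set y : ι → ℝ := fun i => |x i| with hy
  have hyN : ∀ j, (∑ i, y i * N i j) = y j := by
    have hge : ∀ j, y j ≤ ∑ i, y i * N i j := by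
      intro j
      calc y j = |∑ i, x i * N i j| := by rw [hstat j]
      _ ≤ ∑ i, |x i * N i j| := Finset.abs_sum_le_sum_abs _ _
      _ = ∑ i, y i * N i j := by
          refine Finset.sum_congr rfl fun i _ => ?_
          rw [abs_mul, abs_of_nonneg (hN i j)]
    have htot : ∑ j, ((∑ i, y i * N i j) - y j) = 0 := by
      rw [Finset.sum_sub_distrib]
      rw [Finset.sum_comm]
      have : ∀ i, (∑ j, y i * N i j) = y i := by
        intro i
        rw [← Finset.mul_sum, hrow i, mul_one]
      rw [Finset.sum_congr rfl fun i _ => this i]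
      ring
    intro j
    have hz : ∀ j ∈ Finset.univ, 0 ≤ (∑ i, y i * N i j) - y j := fun j _ => by
      linarith [hge j]
    have := (Finset.sum_eq_zero_iff_of_nonneg hz).mp htot j (Finset.mem_univ j)
    linarith
  have hxs : ∃ i, 0 < y i := by
    by_contra hc
    push_neg at hc
    apply hx0
    funext i
    have h1 := hc i
    have h2 : 0 ≤ y i := abs_nonneg _
    have : y i = 0 := le_antisymm h1 h2
    simpa [hy, abs_eq_zero] using this
  obtain ⟨i₀, hi₀⟩ := hxs
  have htotpos : 0 < ∑ i, y i := by
    have := Finset.single_le_sum (f := y) (fun i _ => abs_nonneg (x i)) (Finset.mem_univ i₀)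
    linarith
  refine ⟨fun i => y i / (∑ i, y i), fun i => div_nonneg (abs_nonneg _) htotpos.le, ?_, ?_⟩
  · rw [← Finset.sum_div, div_self htotpos.ne']
  · intro j
    have : (∑ i, y i / (∑ i', y i') * N i j) = (∑ i, y i * N i j) / (∑ i', y i') := by
      rw [Finset.sum_div]
      exact Finset.sum_congr rfl fun i _ => by ring
    rw [this, hyN j]

end Birec


set_option maxHeartbeats 2000000 in

/-- **Corollary.** Let `S = X*P` be a dense birecurrent set of finite type with left
root `X` and associated set `P` of proper prefixes of `X` (those lying in `S`).  Then
for any positive Bernoulli distribution `π`, the average length of `X` satisfies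
`λ(X) = i(S) · π(P)`, where the index `i(S) = d/k` is computed from any word `w` of
minimal nonzero rank `d` saturating the terminal states, `k` being the number of classes
of the kernel of `w` whose union is the terminal set. -/
theorem average_length_eq_index_mul {A : Type*} [Fintype A] (S P : Set (List A))
    (hdense : LangDense S) (hbi : Birecurrent S) (hft : FiniteType S)
    (hP : P = {q | q ∈ S ∧ q ∈ properPrefixes (leftRoot S)})
    (hSP : S = setMul (star (leftRoot S)) P)
    (w : List A) (hw : IsMinNonzeroMrank S w) (hsat : SaturatedBy S w)
    (p : A → ℝ) (hp : ∀ a, 0 < p a) (hsum : ∑ a, p a = 1) :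
    ∑' x : (leftRoot S), ((x : List A).length : ℝ) * ((x : List A).map p).prod =
      ((mrank S w : ℝ) /
          ({T : Set (List A) | ∃ q ∈ TerminalStates S, T = leftQuot q w}.ncard : ℝ)) *
        ∑' q : P, ((q : List A).map p).prod := by
  classical
  obtain ⟨hrec, -⟩ := hbi
  have hcomp := complete hdense hrec
  have hSne := S_nonempty hdense
  have hXfin : (leftRoot S).Finite := hft.1
  have hXne : (leftRoot S).Nonempty := by
    obtain ⟨s, hs⟩ := hSne
    rw [hSP] at hs
    obtain ⟨m, -, q, hq, -⟩ := hs
    rw [hP] at hq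
    obtain ⟨-, x, hx, -, -⟩ := hq
    exact ⟨x, hx⟩
  -- notation
  set Qf := (properPrefixes_finite hXfin).toFinset with hQfdef
  set Xf := hXfin.toFinset with hXfdef
  have hmemQ : ∀ q, q ∈ Qf ↔ q ∈ properPrefixes (leftRoot S) :=
    fun q => Set.Finite.mem_toFinset _
  have hmemX : ∀ x, x ∈ Xf ↔ x ∈ leftRoot S := fun x => Set.Finite.mem_toFinset _
  have hnilQ : [] ∈ Qf := by
    obtain ⟨x, hx⟩ := hXne
    exact (hmemQ []).mpr ⟨x, hx, List.nil_prefix, fun h => leftRoot_ne_nil hx h.symm⟩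
  have hπpos : ∀ u : List A, 0 < (u.map p).prod := by
    intro u
    apply List.prod_pos
    intro x hx
    obtain ⟨a, -, rfl⟩ := List.mem_map.mp hx
    exact hp a
  have hπnil : (([] : List A).map p).prod = 1 := by simp
  have hπa : ∀ (u : List A) (a : A), ((u ++ [a]).map p).prod = (u.map p).prod * p a := by
    intro u a; simp
  -- master corollaries
  have kraft : ∑ x ∈ Xf, (x.map p).prod = 1 := by
    have h := master hP hSP hcomp hXfin hXne p hsum (fun _ => 1)
    have h2 : ∀ q ∈ Qf, (q.map p).prod * (∑ a, p a * 1) = (q.map p).prod := by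
      intro q _; simp [hsum]
    rw [Finset.sum_congr rfl h2] at h
    simp only [mul_one] at h
    linarith
  have lambdaQ : ∑ x ∈ Xf, (x.map p).prod * (x.length : ℝ)
      = ∑ q ∈ Qf, (q.map p).prod := by
    have h := master hP hSP hcomp hXfin hXne p hsum (fun u => (u.length : ℝ))
    have h2 : ∀ q ∈ Qf, (q.map p).prod * (∑ a, p a * (((q ++ [a]).length : ℕ) : ℝ))
        = (q.map p).prod * ((q.length : ℝ) + 1) := by
      intro q _
      congr 1
      have : ∀ a : A, p a * (((q ++ [a]).length : ℕ) : ℝ) = p a * ((q.length : ℝ) + 1) := by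
        intro a; push_cast [List.length_append]; simp
      rw [Finset.sum_congr rfl fun a _ => this a, ← Finset.sum_mul, hsum, one_mul]
    rw [Finset.sum_congr rfl h2] at h
    simp only [List.length_nil, Nat.cast_zero] at h
    have h3 : ∑ q ∈ Qf, (q.map p).prod * ((q.length : ℝ) + 1)
        = ∑ q ∈ Qf, (q.map p).prod * (q.length : ℝ) + ∑ q ∈ Qf, (q.map p).prod := by
      rw [← Finset.sum_add_distrib]
      exact Finset.sum_congr rfl fun q _ => by ring
    rw [h3] at h
    linarith
  -- the states
  set states : Finset (Set (List A)) := (minStates_finite hrec.1).toFinset with hstdef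
  have hmemSt : ∀ q, q ∈ states ↔ q ∈ MinStates S := fun q => Set.Finite.mem_toFinset _
  have hSst : S ∈ states := (hmemSt S).mpr ⟨hSne, [], (leftQuot_nil S).symm⟩
  have hstq : ∀ u : List A, leftQuot S u ∈ states :=
    fun u => (hmemSt _).mpr ⟨hcomp u, u, rfl⟩
  have hrep : ∀ q ∈ states, ∃ y : List A, q = leftQuot S y := by
    intro q hq
    exact ((hmemSt q).mp hq).2
  have htrans : ∀ q ∈ states, ∀ u : List A, leftQuot q u ∈ states := by
    intro q hq u
    obtain ⟨y, rfl⟩ := hrep q hq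
    rw [← leftQuot_append]
    exact hstq _
  have hstnonempty : ∀ q ∈ states, q.Nonempty := fun q hq => ((hmemSt q).mp hq).1
  -- the weight vector V
  set V : Set (List A) → ℝ := fun q => ∑ r ∈ Qf.filter (fun r => leftQuot S r = q),
    (r.map p).prod with hVdef
  have hVsum : ∀ f : Set (List A) → ℝ,
      ∑ q ∈ states, V q * f q = ∑ r ∈ Qf, (r.map p).prod * f (leftQuot S r) := by
    intro f
    rw [eq_comm, ← Finset.sum_fiberwise_of_maps_to (g := fun r => leftQuot S r)
      (fun r _ => hstq r) (fun r => (r.map p).prod * f (leftQuot S r))]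
    refine Finset.sum_congr rfl fun q hq => ?_
    have : ∀ r ∈ Qf.filter (fun r => leftQuot S r = q),
        (r.map p).prod * f (leftQuot S r) = (r.map p).prod * f q := by
      intro r hr
      rw [(Finset.mem_filter.mp hr).2]
    rw [Finset.sum_congr rfl this, ← Finset.sum_mul]
  -- transition matrix
  set M : Set (List A) → Set (List A) → ℝ :=
    fun q q' => ∑ a, p a * (if leftQuot q [a] = q' then 1 else 0) with hMdef
  have hMnn : ∀ q q', 0 ≤ M q q' := by
    intro q q'
    apply Finset.sum_nonneg
    intro a _
    have := (hp a).le
    positivity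
  have hMlow : ∀ q (a : A), p a ≤ M q (leftQuot q [a]) := by
    intro q a
    have h1 : p a * (if leftQuot q [a] = leftQuot q [a] then (1:ℝ) else 0) = p a := by simp
    calc p a = p a * (if leftQuot q [a] = leftQuot q [a] then (1:ℝ) else 0) := h1.symm
    _ ≤ M q (leftQuot q [a]) := by
        apply Finset.single_le_sum (f := fun a' => p a' * (if leftQuot q [a'] = leftQuot q [a] then (1:ℝ) else 0))
          (fun a' _ => by have := (hp a').le; positivity) (Finset.mem_univ a)
  -- stationarity of V
  have hstatV : ∀ q' ∈ states, ∑ q ∈ states, V q * M q q' = V q' := by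
    intro q' hq'
    have h := master hP hSP hcomp hXfin hXne p hsum
      (fun u => if leftQuot S u = q' then (1:ℝ) else 0)
    have e1 : ∀ r ∈ Qf, (r.map p).prod *
        (∑ a, p a * (if leftQuot S (r ++ [a]) = q' then (1:ℝ) else 0))
        = (r.map p).prod * M (leftQuot S r) q' := by
      intro r _
      congr 1
      refine Finset.sum_congr rfl fun a _ => ?_
      rw [leftQuot_append]
    rw [Finset.sum_congr rfl e1] at h
    have e2 : ∑ x ∈ Xf, (x.map p).prod * (if leftQuot S x = q' then (1:ℝ) else 0)
        = if S = q' then (1:ℝ) else 0 := by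
      have : ∀ x ∈ Xf, (x.map p).prod * (if leftQuot S x = q' then (1:ℝ) else 0)
          = (x.map p).prod * (if S = q' then (1:ℝ) else 0) := by
        intro x hx
        rw [leftRoot_stab ((hmemX x).mp hx)]
      rw [Finset.sum_congr rfl this, ← Finset.sum_mul, kraft, one_mul]
    rw [leftQuot_nil] at h
    rw [e2] at h
    have e3 : ∑ q ∈ states, V q * M q q'
        = ∑ r ∈ Qf, (r.map p).prod * M (leftQuot S r) q' := hVsum (fun q => M q q')
    have e4 : ∑ q ∈ states, V q * (if q = q' then (1:ℝ) else 0) = V q' := by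
      simp only [mul_ite, mul_one, mul_zero]
      rw [Finset.sum_ite_eq' states q' V]
      simp [hq']
    have e5 : ∑ q ∈ states, V q * (if q = q' then (1:ℝ) else 0)
        = ∑ r ∈ Qf, (r.map p).prod * (if leftQuot S r = q' then (1:ℝ) else 0) :=
      hVsum (fun q => if q = q' then (1:ℝ) else 0)
    rw [e3, h, ← e5, e4]
    ring
  -- rank machinery
  set φ : List A → Set (List A) → Set (List A) := fun u q => leftQuot q u with hφdef
  set img : List A → Finset (Set (List A)) := fun u => states.image (φ u) with himgdef
  have hφcomp : ∀ (u v : List A) q, φ v (φ u q) = φ (u ++ v) q := by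
    intro u v q
    simp only [hφdef]
    rw [leftQuot_append]
  have himgsub : ∀ u, img u ⊆ states := by
    intro u T hT
    obtain ⟨q, hq, rfl⟩ := Finset.mem_image.mp hT
    exact htrans q hq u
  have himgne : ∀ u, (img u).Nonempty := fun u => ⟨φ u S, Finset.mem_image_of_mem _ hSst⟩
  have himgcomp : ∀ u v, img (u ++ v) = (img u).image (φ v) := by
    intro u v
    simp only [himgdef]
    rw [Finset.image_image]
    refine Finset.image_congr ?_
    intro q _
    exact (hφcomp u v q).symm
  have hmrank : ∀ u, mrank S u = (img u).card := by
    intro u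
    have hset : {T : Set (List A) | T.Nonempty ∧ ∃ v : List A, T = leftQuot S (v ++ u)}
        = ↑(img u) := by
      ext T
      constructor
      · rintro ⟨-, v, rfl⟩
        exact Finset.mem_coe.mpr (Finset.mem_image.mpr
          ⟨leftQuot S v, hstq v, (leftQuot_append S v u).symm⟩)
      · intro hT
        obtain ⟨q, hq, rfl⟩ := Finset.mem_image.mp (Finset.mem_coe.mp hT)
        obtain ⟨y, rfl⟩ := hrep q hq
        refine ⟨?_, y, (leftQuot_append S y u).symm⟩
        show (leftQuot (leftQuot S y) u).Nonempty
        rw [← leftQuot_append]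
        exact hcomp _
    rw [mrank, hset, Set.ncard_coe_finset]
  set d := (img w).card with hddef
  have hdpos : 0 < d := Finset.card_pos.mpr (himgne w)
  have hdmin : ∀ u, d ≤ (img u).card := by
    intro u
    have h1 : mrank S u ≠ 0 := by
      rw [hmrank]
      exact (Finset.card_pos.mpr (himgne u)).ne'
    have := hw.2 u h1
    rwa [hmrank, hmrank] at this
  set isMin : Finset (Set (List A)) → Prop := fun I => (∃ u, I = img u) ∧ I.card = d
    with hisMindef
  have hminstep : ∀ I, isMin I → ∀ v, Set.InjOn (φ v) ↑I ∧ isMin (I.image (φ v)) := by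
    intro I hI v
    obtain ⟨⟨u, rfl⟩, hcard⟩ := hI
    have h1 : (img u).image (φ v) = img (u ++ v) := (himgcomp u v).symm
    have h2 : ((img u).image (φ v)).card = d := by
      have hle : ((img u).image (φ v)).card ≤ d := le_trans (Finset.card_image_le) hcard.le
      have hge : d ≤ ((img u).image (φ v)).card := by rw [h1]; exact hdmin _
      omega
    exact ⟨Finset.injOn_of_card_image_eq (by rw [h2, hcard]), ⟨⟨u ++ v, h1⟩, h2⟩⟩
  have hminE₀ : isMin (img w) := ⟨⟨w, rfl⟩, rfl⟩
  -- terminal states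
  set Tfin : Finset (Set (List A)) := states.filter (fun q => [] ∈ q) with hTdef
  have hTne : Tfin.Nonempty := by
    obtain ⟨s, hs⟩ := hSne
    refine ⟨leftQuot S s, Finset.mem_filter.mpr ⟨hstq s, ?_⟩⟩
    rw [mem_leftQuot, List.append_nil]
    exact hs
  set K : Finset (Set (List A)) := Tfin.image (φ w) with hKdef
  set k := K.card with hkdef
  have hkpos : 0 < k := Finset.card_pos.mpr (hTne.image _)
  have hsatur : ∀ q ∈ states, (φ w q ∈ K ↔ q ∈ Tfin) := by
    intro q hq
    constructor
    · intro hqK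
      obtain ⟨t, ht, hteq⟩ := Finset.mem_image.mp hqK
      have ht' := Finset.mem_filter.mp ht
      have hiff := hsat.2 t q ((hmemSt t).mp ht'.1) ((hmemSt q).mp hq)
        (hstnonempty _ (htrans t ht'.1 w)) (hstnonempty _ (htrans q hq w)) hteq
      exact Finset.mem_filter.mpr ⟨hq, hiff.mp ht'.2⟩
    · intro hqT
      exact Finset.mem_image_of_mem _ hqT
  have hKsub : K ⊆ img w := by
    intro y hy
    obtain ⟨t, ht, rfl⟩ := Finset.mem_image.mp hy
    exact Finset.mem_image_of_mem _ ((Finset.filter_subset _ _) ht)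
  have hTI : ∀ I, isMin I → I ⊆ states → (I.filter (fun q => [] ∈ q)).card = k := by
    intro I hI hIsub
    have hinj : Set.InjOn (φ w) ↑I := (hminstep I hI w).1
    have h1 : I.image (φ w) = img w := by
      apply Finset.eq_of_subset_of_card_le
      · intro y hy
        obtain ⟨q, hq, rfl⟩ := Finset.mem_image.mp hy
        exact Finset.mem_image_of_mem _ (hIsub hq)
      · rw [(hminstep I hI w).2.2]
    have h2 : (I.filter (fun q => [] ∈ q)).image (φ w) = K := by
      apply Finset.Subset.antisymm
      · intro y hy
        obtain ⟨q, hq, rfl⟩ := Finset.mem_image.mp hy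
        have hq' := Finset.mem_filter.mp hq
        exact Finset.mem_image_of_mem _ (Finset.mem_filter.mpr ⟨hIsub hq'.1, hq'.2⟩)
      · intro y hy
        have hyE : y ∈ I.image (φ w) := by rw [h1]; exact hKsub hy
        obtain ⟨q, hq, rfl⟩ := Finset.mem_image.mp hyE
        have hqT : q ∈ Tfin := (hsatur q (hIsub hq)).mp hy
        exact Finset.mem_image_of_mem _
          (Finset.mem_filter.mpr ⟨hq, (Finset.mem_filter.mp hqT).2⟩)
    calc (I.filter (fun q => [] ∈ q)).card
        = ((I.filter (fun q => [] ∈ q)).image (φ w)).card :=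
          (Finset.card_image_of_injOn (hinj.mono (by
            intro x hx
            exact (Finset.filter_subset _ _) hx))).symm
    _ = k := by rw [h2]
  -- minimal images
  set minImgs : Finset (Finset (Set (List A))) := (states.powerset).filter isMin
    with hmindef
  have hmemMin : ∀ I, I ∈ minImgs ↔ (I ⊆ states ∧ isMin I) := by
    intro I
    rw [hmindef, Finset.mem_filter, Finset.mem_powerset]
  have hE₀mem : img w ∈ minImgs := (hmemMin _).mpr ⟨himgsub w, hminE₀⟩
  have hstepmem : ∀ (a : A), ∀ I ∈ minImgs, I.image (φ [a]) ∈ minImgs := by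
    intro a I hI
    obtain ⟨hIsub, hImin⟩ := (hmemMin I).mp hI
    refine (hmemMin _).mpr ⟨?_, (hminstep I hImin [a]).2⟩
    intro y hy
    obtain ⟨q, hq, rfl⟩ := Finset.mem_image.mp hy
    exact htrans q (hIsub hq) [a]
  have hcardMin : ∀ I ∈ minImgs, I.card = d := fun I hI => ((hmemMin I).mp hI).2.2
  -- the image chain and its stationary vector
  haveI : Nonempty {I // I ∈ minImgs} := ⟨⟨img w, hE₀mem⟩⟩
  set N : Matrix {I // I ∈ minImgs} {I // I ∈ minImgs} ℝ :=
    fun I J => ∑ a, p a * (if I.1.image (φ [a]) = J.1 then 1 else 0) with hNdef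
  have hNnn : ∀ I J, 0 ≤ N I J := by
    intro I J
    apply Finset.sum_nonneg
    intro a _
    have := (hp a).le
    positivity
  have hsub1 : ∀ (f : Finset (Set (List A)) → ℝ),
      ∑ J : {I // I ∈ minImgs}, f J.1 = ∑ J ∈ minImgs, f J :=
    fun f => (Finset.sum_subtype minImgs (fun x => Iff.rfl) f).symm
  have hNrow : ∀ I, ∑ J, N I J = 1 := by
    intro I
    rw [Finset.sum_comm]
    have h1 : ∀ a : A, ∑ J : {I // I ∈ minImgs},
        p a * (if I.1.image (φ [a]) = J.1 then (1:ℝ) else 0) = p a := by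
      intro a
      rw [← Finset.mul_sum]
      rw [hsub1 (fun J => if I.1.image (φ [a]) = J then (1:ℝ) else 0)]
      rw [Finset.sum_ite_eq minImgs (I.1.image (φ [a])) (fun _ => (1:ℝ))]
      simp [hstepmem a I.1 I.2]
    rw [Finset.sum_congr rfl fun a _ => h1 a, hsum]
  obtain ⟨ν, hν0, hν1, hνstat⟩ := exists_stationary N hNnn hNrow
  -- the second stationary vector on states
  set v2 : Set (List A) → ℝ :=
    fun q => ∑ I : {I // I ∈ minImgs}, ν I * (if q ∈ I.1 then 1 else 0) with hv2def
  have hv2nn : ∀ q, 0 ≤ v2 q := by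
    intro q
    apply Finset.sum_nonneg
    intro I _
    have := hν0 I
    positivity
  have hcount : ∀ (T : Finset (Set (List A))), ∀ I : Finset (Set (List A)), I ⊆ T →
      ∑ q ∈ T, (if q ∈ I then (1:ℝ) else 0) = I.card := by
    intro T I hsub
    rw [Finset.sum_ite_mem, Finset.inter_eq_right.mpr hsub]
    simp
  have hv2tot : ∑ q ∈ states, v2 q = d := by
    rw [Finset.sum_comm]
    have h1 : ∀ I : {I // I ∈ minImgs},
        ∑ q ∈ states, ν I * (if q ∈ I.1 then (1:ℝ) else 0) = ν I * d := by
      intro I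
      rw [← Finset.mul_sum, hcount states I.1 ((hmemMin I.1).mp I.2).1,
        hcardMin I.1 I.2]
    rw [Finset.sum_congr rfl fun I _ => h1 I, ← Finset.sum_mul, hν1, one_mul]
  have hv2T : ∑ q ∈ Tfin, v2 q = k := by
    rw [Finset.sum_comm]
    have h1 : ∀ I : {I // I ∈ minImgs},
        ∑ q ∈ Tfin, ν I * (if q ∈ I.1 then (1:ℝ) else 0) = ν I * k := by
      intro I
      rw [← Finset.mul_sum, Finset.sum_ite_mem]
      have h2 : Tfin ∩ I.1 = I.1.filter (fun q => [] ∈ q) := by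
        ext q
        simp only [Finset.mem_inter, Finset.mem_filter, hTdef]
        constructor
        · rintro ⟨⟨-, h⟩, hI⟩; exact ⟨hI, h⟩
        · rintro ⟨hI, h⟩
          exact ⟨⟨((hmemMin I.1).mp I.2).1 hI, h⟩, hI⟩
      rw [h2]
      have h3 := hTI I.1 ((hmemMin I.1).mp I.2).2 ((hmemMin I.1).mp I.2).1
      rw [Finset.sum_const, h3]
      simp
    rw [Finset.sum_congr rfl fun I _ => h1 I, ← Finset.sum_mul, hν1, one_mul]
  -- single fiber counting within a minimal image
  have honeI : ∀ I, I ∈ minImgs → ∀ (a : A) (q' : Set (List A)),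
      (∑ q ∈ I, if φ [a] q = q' then (1:ℝ) else 0)
        = if q' ∈ I.image (φ [a]) then (1:ℝ) else 0 := by
    intro I hI a q'
    obtain ⟨hIsub, hImin⟩ := (hmemMin I).mp hI
    have hinj : Set.InjOn (φ [a]) ↑I := (hminstep I hImin [a]).1
    by_cases hmem : q' ∈ I.image (φ [a])
    · obtain ⟨q₀, hq₀, hq₀eq⟩ := Finset.mem_image.mp hmem
      have hfil : I.filter (fun q => φ [a] q = q') = {q₀} := by
        ext r
        simp only [Finset.mem_filter, Finset.mem_singleton]
        constructor
        · rintro ⟨hr, hre⟩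
          exact hinj hr hq₀ (by rw [hre, hq₀eq])
        · rintro rfl
          exact ⟨hq₀, hq₀eq⟩
      rw [Finset.sum_boole, hfil]
      simp [hmem]
    · have hfil : I.filter (fun q => φ [a] q = q') = ∅ := by
        rw [Finset.filter_eq_empty_iff]
        intro r hr hre
        exact hmem (Finset.mem_image.mpr ⟨r, hr, hre⟩)
      rw [Finset.sum_boole, hfil]
      simp [hmem]
  -- row identity for the image chain
  have hIrow : ∀ (I : {I // I ∈ minImgs}) (q' : Set (List A)),
      (∑ q ∈ I.1, M q q') = ∑ J : {I // I ∈ minImgs}, N I J * (if q' ∈ J.1 then 1 else 0) := by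
    intro I q'
    have lhs1 : (∑ q ∈ I.1, M q q')
        = ∑ a, p a * (if q' ∈ I.1.image (φ [a]) then (1:ℝ) else 0) := by
      rw [hMdef]
      rw [Finset.sum_comm]
      refine Finset.sum_congr rfl fun a _ => ?_
      rw [← Finset.mul_sum, honeI I.1 I.2 a q']
    have rhs1 : (∑ J : {I // I ∈ minImgs}, N I J * (if q' ∈ J.1 then 1 else 0))
        = ∑ a, p a * (if q' ∈ I.1.image (φ [a]) then (1:ℝ) else 0) := by
      have h1 : ∀ J : {I // I ∈ minImgs}, N I J * (if q' ∈ J.1 then (1:ℝ) else 0)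
          = ∑ a, p a * ((if I.1.image (φ [a]) = J.1 then (1:ℝ) else 0)
              * (if q' ∈ J.1 then 1 else 0)) := by
        intro J
        rw [hNdef, Finset.sum_mul]
        refine Finset.sum_congr rfl fun a _ => by ring
      rw [Finset.sum_congr rfl fun J _ => h1 J, Finset.sum_comm]
      refine Finset.sum_congr rfl fun a _ => ?_
      rw [← Finset.mul_sum]
      congr 1
      have h2 : ∀ J : Finset (Set (List A)),
          (if I.1.image (φ [a]) = J then (1:ℝ) else 0) * (if q' ∈ J then 1 else 0)
          = if I.1.image (φ [a]) = J then (if q' ∈ J then (1:ℝ) else 0) else 0 := by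
        intro J
        by_cases h : I.1.image (φ [a]) = J <;> simp [h]
      rw [hsub1 (fun J => (if I.1.image (φ [a]) = J then (1:ℝ) else 0) * (if q' ∈ J then 1 else 0))]
      rw [Finset.sum_congr rfl fun J _ => h2 J]
      rw [Finset.sum_ite_eq minImgs (I.1.image (φ [a])) (fun J => if q' ∈ J then (1:ℝ) else 0)]
      simp [hstepmem a I.1 I.2]
    rw [lhs1, rhs1]
  -- stationarity of v2
  have hstatv2 : ∀ q' ∈ states, ∑ q ∈ states, v2 q * M q q' = v2 q' := by
    intro q' hq'
    have step1 : ∑ q ∈ states, v2 q * M q q'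
        = ∑ I : {I // I ∈ minImgs}, ν I * ∑ q ∈ I.1, M q q' := by
      rw [hv2def]
      simp only [Finset.sum_mul]
      rw [Finset.sum_comm]
      refine Finset.sum_congr rfl fun I _ => ?_
      rw [Finset.mul_sum]
      have h1 : ∀ q ∈ states, ν I * (if q ∈ I.1 then (1:ℝ) else 0) * M q q'
          = ν I * (if q ∈ I.1 then M q q' else 0) := by
        intro q _
        by_cases h : q ∈ I.1 <;> simp [h]
      rw [Finset.sum_congr rfl h1, ← Finset.mul_sum, Finset.sum_ite_mem,
        Finset.inter_eq_right.mpr ((hmemMin I.1).mp I.2).1]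
      rw [Finset.mul_sum]
    rw [step1]
    have step2 : ∑ I : {I // I ∈ minImgs}, ν I * ∑ q ∈ I.1, M q q'
        = ∑ J : {I // I ∈ minImgs}, (∑ I : {I // I ∈ minImgs}, ν I * N I J)
            * (if q' ∈ J.1 then 1 else 0) := by
      have h1 : ∀ I : {I // I ∈ minImgs}, ν I * ∑ q ∈ I.1, M q q'
          = ∑ J : {I // I ∈ minImgs}, ν I * N I J * (if q' ∈ J.1 then 1 else 0) := by
        intro I
        rw [hIrow I q', Finset.mul_sum]
        refine Finset.sum_congr rfl fun J _ => by ring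
      rw [Finset.sum_congr rfl fun I _ => h1 I, Finset.sum_comm]
      refine Finset.sum_congr rfl fun J _ => ?_
      rw [Finset.sum_mul]
    rw [step2]
    have step3 : ∀ J : {I // I ∈ minImgs}, (∑ I : {I // I ∈ minImgs}, ν I * N I J)
        * (if q' ∈ J.1 then (1:ℝ) else 0) = ν J * (if q' ∈ J.1 then 1 else 0) := by
      intro J
      rw [hνstat J]
    rw [Finset.sum_congr rfl fun J _ => step3 J]
  -- positivity of stationary vectors
  have hstep2 : ∀ x : Set (List A) → ℝ, (∀ q, 0 ≤ x q) →
      (∀ q' ∈ states, ∑ q ∈ states, x q * M q q' = x q') →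
      ∀ u : List A, ∀ q ∈ states, (u.map p).prod * x q ≤ x (φ u q) := by
    intro x hx hstat u
    induction u with
    | nil =>
      intro q hq
      simp only [List.map_nil, List.prod_nil, one_mul]
      exact le_refl _
    | cons a u' ih =>
      intro q hq
      have h1 : p a * x q ≤ x (φ [a] q) := by
        have h2 : x q * M q (leftQuot q [a]) ≤ ∑ r ∈ states, x r * M r (leftQuot q [a]) := by
          apply Finset.single_le_sum (f := fun r => x r * M r (leftQuot q [a]))
            (fun r _ => mul_nonneg (hx r) (hMnn r _)) hq
        have h3 : p a * x q ≤ x q * M q (leftQuot q [a]) := by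
          have := hMlow q a
          nlinarith [hx q]
        have h4 := hstat (leftQuot q [a]) (htrans q hq [a])
        have h5 : φ [a] q = leftQuot q [a] := rfl
        rw [h5]
        linarith
      have h6 : φ (a :: u') q = φ u' (φ [a] q) := by
        have : [a] ++ u' = a :: u' := rfl
        rw [← this, ← hφcomp]
      rw [h6]
      have h7 := ih (φ [a] q) (htrans q hq [a])
      have h8 : ((a :: u').map p).prod = p a * (u'.map p).prod := by simp
      rw [h8]
      have h9 : 0 ≤ (u'.map p).prod := (hπpos u').le
      nlinarith
  have hconn : ∀ q ∈ states, ∀ q' ∈ states, ∃ u : List A, φ u q = q' := by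
    intro q hq q' hq'
    obtain ⟨y, rfl⟩ := hrep q hq
    obtain ⟨y', rfl⟩ := hrep q' hq'
    obtain ⟨u, hu⟩ := hrec.2 y y' (hcomp y) (hcomp y')
    refine ⟨u, ?_⟩
    show leftQuot (leftQuot S y) u = leftQuot S y'
    rw [← leftQuot_append, hu]
  have hpos : ∀ x : Set (List A) → ℝ, (∀ q, 0 ≤ x q) →
      (∀ q' ∈ states, ∑ q ∈ states, x q * M q q' = x q') →
      (∃ q₀ ∈ states, 0 < x q₀) → ∀ q ∈ states, 0 < x q := by
    intro x hx hstat ⟨q₀, hq₀, hq₀pos⟩ q hq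
    obtain ⟨u, hu⟩ := hconn q₀ hq₀ q hq
    have := hstep2 x hx hstat u q₀ hq₀
    rw [hu] at this
    nlinarith [hπpos u]
  -- positivity of V and v2
  have hVnn : ∀ q, 0 ≤ V q := by
    intro q
    apply Finset.sum_nonneg
    intro r _
    exact (hπpos r).le
  have hVtot : ∑ q ∈ states, V q = ∑ r ∈ Qf, (r.map p).prod := by
    have := hVsum (fun _ => 1)
    simpa using this
  have hQfpos : 0 < ∑ r ∈ Qf, (r.map p).prod := by
    have h1 : (([] : List A).map p).prod ≤ ∑ r ∈ Qf, (r.map p).prod :=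
      Finset.single_le_sum (fun r _ => (hπpos r).le) hnilQ
    rw [hπnil] at h1
    linarith
  have hexV : ∃ q₀ ∈ states, 0 < V q₀ := by
    by_contra hc
    push_neg at hc
    have : ∑ q ∈ states, V q ≤ 0 := Finset.sum_nonpos hc
    rw [hVtot] at this
    linarith
  have hexv2 : ∃ q₀ ∈ states, 0 < v2 q₀ := by
    by_contra hc
    push_neg at hc
    have : ∑ q ∈ states, v2 q ≤ 0 := Finset.sum_nonpos hc
    rw [hv2tot] at this
    have : (0:ℝ) < d := by exact_mod_cast hdpos
    linarith
  have hVpos : ∀ q ∈ states, 0 < V q := hpos V hVnn hstatV hexV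
  have hv2pos : ∀ q ∈ states, 0 < v2 q := hpos v2 hv2nn hstatv2 hexv2
  -- the uniqueness argument
  obtain ⟨q₀, hq₀mem, hq₀min⟩ := Finset.exists_min_image states (fun q => V q / v2 q)
    ⟨S, hSst⟩
  set c := V q₀ / v2 q₀ with hcdef
  have hcpos : 0 < c := div_pos (hVpos q₀ hq₀mem) (hv2pos q₀ hq₀mem)
  set y : Set (List A) → ℝ := fun q => V q - c * v2 q with hydef
  have hynn : ∀ q ∈ states, 0 ≤ y q := by
    intro q hq
    have h1 : c ≤ V q / v2 q := hq₀min q hq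
    have h2 := hv2pos q hq
    rw [hydef]
    simp only
    rw [sub_nonneg]
    exact (le_div_iff₀ h2).mp h1
  have hyq₀ : y q₀ = 0 := by
    have h2 := (hv2pos q₀ hq₀mem).ne'
    rw [hydef]
    simp only [hcdef]
    field_simp
    ring
  have hystat : ∀ q' ∈ states, ∑ q ∈ states, y q * M q q' = y q' := by
    intro q' hq'
    have h1 : ∀ q ∈ states, y q * M q q' = V q * M q q' - c * (v2 q * M q q') := by
      intro q _
      rw [hydef]; ring
    rw [Finset.sum_congr rfl h1, Finset.sum_sub_distrib, ← Finset.mul_sum,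
      hstatV q' hq', hstatv2 q' hq']
  have hyzero : ∀ q ∈ states, y q = 0 := by
    intro q hq
    by_contra hne
    have hqpos : 0 < y q := lt_of_le_of_ne (hynn q hq) (Ne.symm hne)
    -- extend y by zero outside states to apply positivity
    set y' : Set (List A) → ℝ := fun r => if r ∈ states then y r else 0 with hy'def
    have hy'nn : ∀ r, 0 ≤ y' r := by
      intro r
      rw [hy'def]
      by_cases h : r ∈ states
      · simp [h, hynn r h]
      · simp [h]
    have hy'stat : ∀ q' ∈ states, ∑ r ∈ states, y' r * M r q' = y' q' := by
      intro q' hq''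
      have h1 : ∀ r ∈ states, y' r * M r q' = y r * M r q' := by
        intro r hr
        rw [hy'def]
        simp [hr]
      rw [Finset.sum_congr rfl h1, hystat q' hq'', hy'def]
      simp [hq'']
    have := hpos y' hy'nn hy'stat ⟨q, hq, by rw [hy'def]; simp [hq, hqpos]⟩ q₀ hq₀mem
    rw [hy'def] at this
    simp only [hq₀mem, if_pos] at this
    rw [hyq₀] at this
    exact lt_irrefl 0 this
  have hVc : ∀ q ∈ states, V q = c * v2 q := by
    intro q hq
    have := hyzero q hq
    rw [hydef] at this
    simp only at this
    linarith
  -- totals via c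
  have hc1 : ∑ r ∈ Qf, (r.map p).prod = c * d := by
    rw [← hVtot, Finset.sum_congr rfl hVc, ← Finset.mul_sum, hv2tot]
  set Pf : Finset (List A) := Qf.filter (fun r => [] ∈ leftQuot S r) with hPfdef
  have hVT : ∑ q ∈ Tfin, V q = ∑ r ∈ Pf, (r.map p).prod := by
    have h1 := hVsum (fun q => if [] ∈ q then (1:ℝ) else 0)
    have h2 : ∑ q ∈ states, V q * (if [] ∈ q then (1:ℝ) else 0) = ∑ q ∈ Tfin, V q := by
      rw [hTdef, Finset.sum_filter]
      refine Finset.sum_congr rfl fun q _ => ?_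
      by_cases h : [] ∈ q <;> simp [h]
    have h3 : ∑ r ∈ Qf, (r.map p).prod * (if [] ∈ leftQuot S r then (1:ℝ) else 0)
        = ∑ r ∈ Pf, (r.map p).prod := by
      rw [hPfdef, Finset.sum_filter]
      refine Finset.sum_congr rfl fun r _ => ?_
      by_cases h : [] ∈ leftQuot S r <;> simp [h]
    rw [← h2, h1, h3]
  have hc2 : ∑ r ∈ Pf, (r.map p).prod = c * k := by
    have hTsub : Tfin ⊆ states := Finset.filter_subset _ _
    rw [← hVT, Finset.sum_congr rfl (fun q hq => hVc q (hTsub hq)), ← Finset.mul_sum, hv2T]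
  -- identification of the index data
  have hmr : (mrank S w : ℝ) = (d : ℝ) := by rw [hmrank w]
  have hnc : {T : Set (List A) | ∃ q ∈ TerminalStates S, T = leftQuot q w}.ncard = k := by
    have hset2 : {T : Set (List A) | ∃ q ∈ TerminalStates S, T = leftQuot q w} = ↑K := by
      ext T
      constructor
      · rintro ⟨q, hqT, rfl⟩
        refine Finset.mem_coe.mpr (Finset.mem_image_of_mem _ ?_)
        exact Finset.mem_filter.mpr ⟨(hmemSt q).mpr hqT.1, hqT.2⟩
      · intro hT
        obtain ⟨q, hqTfin, rfl⟩ := Finset.mem_image.mp (Finset.mem_coe.mp hT)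
        obtain ⟨hq1, hq2⟩ := Finset.mem_filter.mp hqTfin
        exact ⟨q, ⟨(hmemSt q).mp hq1, hq2⟩, rfl⟩
    rw [hset2, Set.ncard_coe_finset]
  -- converting the tsums to finite sums
  have htsum1 : ∑' x : (leftRoot S), ((x : List A).length : ℝ) * ((x : List A).map p).prod
      = ∑ x ∈ Xf, (x.length : ℝ) * (x.map p).prod := by
    rw [tsum_subtype (leftRoot S) (fun u : List A => (u.length : ℝ) * (u.map p).prod)]
    rw [tsum_eq_sum (s := Xf) (f := (leftRoot S).indicator
      (fun u : List A => (u.length : ℝ) * (u.map p).prod)) ?_]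
    · refine Finset.sum_congr rfl fun x hx => ?_
      rw [Set.indicator_of_mem ((hmemX x).mp hx)]
    · intro b hb
      exact Set.indicator_of_notMem (fun hmem => hb ((hmemX b).mpr hmem)) _
  have hPmem : ∀ r : List A, r ∈ P ↔ r ∈ Pf := by
    intro r
    rw [hPfdef, Finset.mem_filter, hP]
    constructor
    · rintro ⟨h1, h2⟩
      refine ⟨(hmemQ r).mpr h2, ?_⟩
      rw [mem_leftQuot, List.append_nil]
      exact h1
    · rintro ⟨h1, h2⟩
      rw [mem_leftQuot, List.append_nil] at h2
      exact ⟨h2, (hmemQ r).mp h1⟩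
  have htsum2 : ∑' q : P, ((q : List A).map p).prod = ∑ r ∈ Pf, (r.map p).prod := by
    rw [tsum_subtype P (fun u : List A => (u.map p).prod)]
    rw [tsum_eq_sum (s := Pf) (f := P.indicator (fun u : List A => (u.map p).prod)) ?_]
    · refine Finset.sum_congr rfl fun r hr => ?_
      rw [Set.indicator_of_mem ((hPmem r).mpr hr)]
    · intro b hb
      exact Set.indicator_of_notMem (fun hmem => hb ((hPmem b).mp hmem)) _
  rw [htsum1, htsum2, hmr, hnc, hc2]
  have hXlen : ∑ x ∈ Xf, (x.length : ℝ) * (x.map p).prod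
      = ∑ x ∈ Xf, (x.map p).prod * (x.length : ℝ) :=
    Finset.sum_congr rfl fun x _ => mul_comm _ _
  rw [hXlen, lambdaQ, hc1]
  have hk0 : (k : ℝ) ≠ 0 := Nat.cast_ne_zero.mpr hkpos.ne'
  field_simp
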